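/- For all n ∈ ℤ and τ in the upper half plane, the Jacobi theta identity θ₂(τ)⁴ + θ₄(τ)⁴ = θ₃(τ)⁴ holds, where θ₂(τ) = Σ_{n∈ℤ} q^{(n+1/2)²/2}, θ₃(τ) = Σ_{n∈ℤ} q^{n²/2}, θ₄(τ) = Σ_{n∈ℤ} (-1)ⁿ q^{n²/2} with q = e^{2πiτ}. -/

import Mathlib

open Complex

/-- Jacobi theta constant θ₂. -/
noncomputable def theta2 (τ : ℂ) : ℂ :=
  ∑' n : ℤ, Complex.exp (Real.pi * Complex.I * τ * ((n : ℂ) + 1/2) ^ 2)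

/-- Jacobi theta constant θ₃. -/
noncomputable def theta3 (τ : ℂ) : ℂ :=
  ∑' n : ℤ, Complex.exp (Real.pi * Complex.I * τ * (n : ℂ) ^ 2)

/-- Jacobi theta constant θ₄. -/
noncomputable def theta4 (τ : ℂ) : ℂ :=
  ∑' n : ℤ, (-1 : ℂ) ^ n * Complex.exp (Real.pi * Complex.I * τ * (n : ℂ) ^ 2)

/-! ### Auxiliary definitions -/

/-- The summand of θ₃. -/
noncomputable def jF3 (τ : ℂ) (n : ℤ) : ℂ := Complex.exp (Real.pi * Complex.I * τ * (n : ℂ) ^ 2)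

/-- The summand of θ₂. -/
noncomputable def jF2 (τ : ℂ) (n : ℤ) : ℂ :=
  Complex.exp (Real.pi * Complex.I * τ * ((n : ℂ) + 1/2) ^ 2)

/-- The summand of θ₄. -/
noncomputable def jF4 (τ : ℂ) (n : ℤ) : ℂ := (-1 : ℂ) ^ n * jF3 τ n

/-- Four-fold product of values of `F`. -/
noncomputable def jG (F : ℤ → ℂ) (v : (ℤ × ℤ) × (ℤ × ℤ)) : ℂ :=
  F v.1.1 * F v.1.2 * (F v.2.1 * F v.2.2)

/-- Sum of the four coordinates. -/
def jS (v : (ℤ × ℤ) × (ℤ × ℤ)) : ℤ := v.1.1 + v.1.2 + v.2.1 + v.2.2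

/-- Half-Hadamard change of variables (even branch). -/
def jT1 (v : (ℤ × ℤ) × (ℤ × ℤ)) : (ℤ × ℤ) × (ℤ × ℤ) :=
  (((v.1.1 + v.1.2 + v.2.1 + v.2.2 - 1) / 2, (v.1.1 + v.1.2 - v.2.1 - v.2.2 - 1) / 2),
   ((v.1.1 - v.1.2 + v.2.1 - v.2.2 - 1) / 2, (v.1.1 - v.1.2 - v.2.1 + v.2.2 - 1) / 2))

/-- Half-Hadamard change of variables (odd branch). -/
def jT2 (v : (ℤ × ℤ) × (ℤ × ℤ)) : (ℤ × ℤ) × (ℤ × ℤ) :=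
  (((v.1.1 + v.1.2 + v.2.1 + v.2.2 - 1) / 2, (v.1.1 + v.1.2 - v.2.1 - v.2.2 - 1) / 2),
   ((v.1.1 - v.1.2 + v.2.1 - v.2.2 - 1) / 2, (-v.1.1 + v.1.2 + v.2.1 - v.2.2 - 1) / 2))

/-! ### Summability -/

lemma summable_norm_jtt (z : ℂ) {τ : ℂ} (hτ : 0 < τ.im) :
    Summable fun n : ℤ => ‖jacobiTheta₂_term n z τ‖ := by
  refine (summable_pow_mul_jacobiTheta₂_term_bound |z.im| hτ 0).of_nonneg_of_le
    (fun n => norm_nonneg _) (fun n => ?_)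
  simpa only [pow_zero, one_mul] using norm_jacobiTheta₂_term_le hτ le_rfl le_rfl n

lemma jF3_eq (τ : ℂ) (n : ℤ) : jF3 τ n = jacobiTheta₂_term n 0 τ := by
  rw [jF3, jacobiTheta₂_term]
  ring_nf

lemma jF2_eq (τ : ℂ) (n : ℤ) :
    jF2 τ n = Complex.exp (Real.pi * Complex.I * τ / 4) * jacobiTheta₂_term n (τ/2) τ := by
  rw [jF2, jacobiTheta₂_term, ← Complex.exp_add]
  congr 1
  ring

lemma summable_norm_jF3 {τ : ℂ} (hτ : 0 < τ.im) : Summable fun n : ℤ => ‖jF3 τ n‖ := by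
  refine (summable_norm_jtt 0 hτ).congr fun n => ?_
  rw [jF3_eq]

lemma summable_norm_jF2 {τ : ℂ} (hτ : 0 < τ.im) : Summable fun n : ℤ => ‖jF2 τ n‖ := by
  refine ((summable_norm_jtt (τ/2) hτ).mul_left
    ‖Complex.exp (Real.pi * Complex.I * τ / 4)‖).congr fun n => ?_
  rw [jF2_eq, norm_mul]

lemma summable_norm_jF4 {τ : ℂ} (hτ : 0 < τ.im) : Summable fun n : ℤ => ‖jF4 τ n‖ := by
  refine (summable_norm_jF3 hτ).congr fun n => ?_
  rw [jF4, norm_mul]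
  simp

lemma summable_norm_jG {F : ℤ → ℂ} (h : Summable fun n => ‖F n‖) :
    Summable fun v => ‖jG F v‖ := by
  have h2 : Summable fun p : ℤ × ℤ => ‖(fun q : ℤ × ℤ => F q.1 * F q.2) p‖ := h.mul_norm h
  exact (h2.mul_norm h2).congr fun v => rfl

lemma tsum_pow_four {F : ℤ → ℂ} (h : Summable fun n => ‖F n‖) :
    (∑' n, F n) ^ 4 = ∑' v, jG F v := by
  have h2 : ((∑' n, F n) * ∑' n, F n) = ∑' p : ℤ × ℤ, F p.1 * F p.2 :=
    tsum_mul_tsum_of_summable_norm h h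
  have h2n : Summable fun p : ℤ × ℤ => ‖(fun q : ℤ × ℤ => F q.1 * F q.2) p‖ := h.mul_norm h
  calc (∑' n, F n) ^ 4 = ((∑' n, F n) * ∑' n, F n) * ((∑' n, F n) * ∑' n, F n) := by ring
    _ = ∑' v, jG F v := by
        rw [h2, tsum_mul_tsum_of_summable_norm h2n h2n]; rfl

/-! ### Pointwise identities -/

lemma jG3_ne_zero (τ : ℂ) (v : (ℤ × ℤ) × (ℤ × ℤ)) : jG (jF3 τ) v ≠ 0 := by
  simp [jG, jF3, Complex.exp_ne_zero]

lemma jG4_eq (τ : ℂ) (v : (ℤ × ℤ) × (ℤ × ℤ)) :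
    jG (jF4 τ) v = (-1 : ℂ) ^ (jS v) * jG (jF3 τ) v := by
  simp only [jG, jF4, jS]
  rw [show ((-1 : ℂ)) ^ (v.1.1 + v.1.2 + v.2.1 + v.2.2)
      = (-1 : ℂ) ^ v.1.1 * (-1 : ℂ) ^ v.1.2 * ((-1 : ℂ) ^ v.2.1 * (-1 : ℂ) ^ v.2.2) by
    rw [zpow_add₀ (by norm_num : (-1:ℂ) ≠ 0), zpow_add₀ (by norm_num : (-1:ℂ) ≠ 0),
      zpow_add₀ (by norm_num : (-1:ℂ) ≠ 0)]; ring]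
  ring

lemma sub_eq_two_mul (τ : ℂ) (v : (ℤ × ℤ) × (ℤ × ℤ)) :
    jG (jF3 τ) v - jG (jF4 τ) v
      = 2 * ((if Odd (jS v) then (1:ℂ) else 0) * jG (jF3 τ) v) := by
  rcases Int.even_or_odd (jS v) with he | ho
  · rw [jG4_eq, he.neg_one_zpow, if_neg (by simpa using he)]
    ring
  · rw [jG4_eq, ho.neg_one_zpow, if_pos ho]
    ring

lemma exp_eq_1 (τ : ℂ) {p q r s k1 k2 k3 k4 : ℤ}
    (h1 : p + q + r + s = 2 * k1 + 1) (h2 : p + q - r - s = 2 * k2 + 1)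
    (h3 : p - q + r - s = 2 * k3 + 1) (h4 : p - q - r + s = 2 * k4 + 1) :
    jG (jF2 τ) ((k1, k2), (k3, k4)) = jG (jF3 τ) ((p, q), (r, s)) := by
  have c1 : (p : ℂ) + q + r + s = 2 * k1 + 1 := by exact_mod_cast congrArg (Int.cast : ℤ → ℂ) h1
  have c2 : (p : ℂ) + q - r - s = 2 * k2 + 1 := by exact_mod_cast congrArg (Int.cast : ℤ → ℂ) h2
  have c3 : (p : ℂ) - q + r - s = 2 * k3 + 1 := by exact_mod_cast congrArg (Int.cast : ℤ → ℂ) h3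
  have c4 : (p : ℂ) - q - r + s = 2 * k4 + 1 := by exact_mod_cast congrArg (Int.cast : ℤ → ℂ) h4
  have d1 : (k1 : ℂ) = ((p : ℂ) + q + r + s - 1) / 2 := by linear_combination -c1 / 2
  have d2 : (k2 : ℂ) = ((p : ℂ) + q - r - s - 1) / 2 := by linear_combination -c2 / 2
  have d3 : (k3 : ℂ) = ((p : ℂ) - q + r - s - 1) / 2 := by linear_combination -c3 / 2
  have d4 : (k4 : ℂ) = ((p : ℂ) - q - r + s - 1) / 2 := by linear_combination -c4 / 2
  simp only [jG, jF2, jF3, ← Complex.exp_add]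
  congr 1
  rw [d1, d2, d3, d4]
  ring

lemma exp_eq_2 (τ : ℂ) {p q r s k1 k2 k3 k4 : ℤ}
    (h1 : p + q + r + s = 2 * k1 + 1) (h2 : p + q - r - s = 2 * k2 + 1)
    (h3 : p - q + r - s = 2 * k3 + 1) (h4 : -p + q + r - s = 2 * k4 + 1) :
    jG (jF2 τ) ((k1, k2), (k3, k4)) = jG (jF3 τ) ((p, q), (r, s)) := by
  have c1 : (p : ℂ) + q + r + s = 2 * k1 + 1 := by exact_mod_cast congrArg (Int.cast : ℤ → ℂ) h1
  have c2 : (p : ℂ) + q - r - s = 2 * k2 + 1 := by exact_mod_cast congrArg (Int.cast : ℤ → ℂ) h2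
  have c3 : (p : ℂ) - q + r - s = 2 * k3 + 1 := by exact_mod_cast congrArg (Int.cast : ℤ → ℂ) h3
  have c4 : -(p : ℂ) + q + r - s = 2 * k4 + 1 := by exact_mod_cast congrArg (Int.cast : ℤ → ℂ) h4
  have d1 : (k1 : ℂ) = ((p : ℂ) + q + r + s - 1) / 2 := by linear_combination -c1 / 2
  have d2 : (k2 : ℂ) = ((p : ℂ) + q - r - s - 1) / 2 := by linear_combination -c2 / 2
  have d3 : (k3 : ℂ) = ((p : ℂ) - q + r - s - 1) / 2 := by linear_combination -c3 / 2
  have d4 : (k4 : ℂ) = (-(p : ℂ) + q + r - s - 1) / 2 := by linear_combination -c4 / 2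
  simp only [jG, jF2, jF3, ← Complex.exp_add]
  congr 1
  rw [d1, d2, d3, d4]
  ring

/-! ### The two changes of variables -/

lemma bij1 (τ : ℂ) :
    (∑' m : (ℤ × ℤ) × (ℤ × ℤ), (if Even (jS m) then (1:ℂ) else 0) * jG (jF2 τ) m)
      = ∑' v : (ℤ × ℤ) × (ℤ × ℤ), (if Odd (jS v) then (1:ℂ) else 0) * jG (jF3 τ) v := by
  apply tsum_eq_tsum_of_ne_zero_bij (fun x => jT1 x.1)
  · rintro ⟨⟨⟨p, q⟩, r, s⟩, hx⟩ ⟨⟨⟨p', q'⟩, r', s'⟩, hy⟩ h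
    rw [Function.mem_support] at hx hy
    have hox : Odd (p + q + r + s) := by by_contra h0; exact hx (by simp [jS, h0])
    have hoy : Odd (p' + q' + r' + s') := by by_contra h0; exact hy (by simp [jS, h0])
    obtain ⟨a, ha⟩ := hox
    obtain ⟨b, hb⟩ := hoy
    simp only [jT1, Prod.mk.injEq] at h
    simp only [Subtype.mk.injEq, Prod.mk.injEq]
    omega
  · rintro ⟨⟨a, b⟩, c, d⟩ hm
    rw [Function.mem_support] at hm
    have he : Even (a + b + c + d) := by by_contra h0; exact hm (by simp [jS, h0])
    obtain ⟨k, hk⟩ := he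
    have hv : (fun v => (if Odd (jS v) then (1:ℂ) else 0) * jG (jF3 τ) v)
        (((a+b+c+d+2)/2, (a+b-c-d)/2), ((a-b+c-d)/2, (a-b-c+d)/2)) ≠ 0 := by
      have hodd : Odd (jS (((a+b+c+d+2)/2, (a+b-c-d)/2), ((a-b+c-d)/2, (a-b-c+d)/2))) := by
        simp only [jS]; exact ⟨a, by omega⟩
      simp only [if_pos hodd, one_mul]
      exact jG3_ne_zero τ _
    refine ⟨⟨_, Function.mem_support.mpr hv⟩, ?_⟩
    simp only [jT1, Prod.mk.injEq]
    refine ⟨⟨by omega, by omega⟩, by omega, by omega⟩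
  · rintro ⟨⟨⟨p, q⟩, r, s⟩, hx⟩
    rw [Function.mem_support] at hx
    have hox : Odd (p + q + r + s) := by by_contra h0; exact hx (by simp [jS, h0])
    obtain ⟨a, ha⟩ := hox
    obtain ⟨k2, hk2⟩ : ∃ k, p + q - r - s = 2 * k + 1 := ⟨(p + q - r - s - 1) / 2, by omega⟩
    obtain ⟨k3, hk3⟩ : ∃ k, p - q + r - s = 2 * k + 1 := ⟨(p - q + r - s - 1) / 2, by omega⟩
    obtain ⟨k4, hk4⟩ : ∃ k, p - q - r + s = 2 * k + 1 := ⟨(p - q - r + s - 1) / 2, by omega⟩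
    have hT : jT1 ((p, q), (r, s)) = ((a, k2), (k3, k4)) := by
      simp only [jT1, Prod.mk.injEq]
      refine ⟨⟨by omega, by omega⟩, by omega, by omega⟩
    dsimp only
    rw [hT]
    have he : Even (jS ((a, k2), (k3, k4))) := by simp only [jS]; exact ⟨p - 1, by omega⟩
    have ho : Odd (jS ((p, q), (r, s))) := by simp only [jS]; exact ⟨a, ha⟩
    rw [if_pos he, if_pos ho, one_mul, one_mul]
    exact exp_eq_1 τ ha hk2 hk3 hk4

lemma bij2 (τ : ℂ) :
    (∑' m : (ℤ × ℤ) × (ℤ × ℤ), (if Odd (jS m) then (1:ℂ) else 0) * jG (jF2 τ) m)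
      = ∑' v : (ℤ × ℤ) × (ℤ × ℤ), (if Odd (jS v) then (1:ℂ) else 0) * jG (jF3 τ) v := by
  apply tsum_eq_tsum_of_ne_zero_bij (fun x => jT2 x.1)
  · rintro ⟨⟨⟨p, q⟩, r, s⟩, hx⟩ ⟨⟨⟨p', q'⟩, r', s'⟩, hy⟩ h
    rw [Function.mem_support] at hx hy
    have hox : Odd (p + q + r + s) := by by_contra h0; exact hx (by simp [jS, h0])
    have hoy : Odd (p' + q' + r' + s') := by by_contra h0; exact hy (by simp [jS, h0])
    obtain ⟨a, ha⟩ := hox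
    obtain ⟨b, hb⟩ := hoy
    simp only [jT2, Prod.mk.injEq] at h
    simp only [Subtype.mk.injEq, Prod.mk.injEq]
    omega
  · rintro ⟨⟨a, b⟩, c, d⟩ hm
    rw [Function.mem_support] at hm
    have he : Odd (a + b + c + d) := by by_contra h0; exact hm (by simp [jS, h0])
    obtain ⟨k, hk⟩ := he
    have hv : (fun v => (if Odd (jS v) then (1:ℂ) else 0) * jG (jF3 τ) v)
        (((a+b+c-d+1)/2, (a+b-c+d+1)/2), ((a-b+c+d+1)/2, (a-b-c-d-1)/2)) ≠ 0 := by
      have hodd : Odd (jS (((a+b+c-d+1)/2, (a+b-c+d+1)/2), ((a-b+c+d+1)/2, (a-b-c-d-1)/2))) := by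
        simp only [jS]; exact ⟨a, by omega⟩
      simp only [if_pos hodd, one_mul]
      exact jG3_ne_zero τ _
    refine ⟨⟨_, Function.mem_support.mpr hv⟩, ?_⟩
    simp only [jT2, Prod.mk.injEq]
    refine ⟨⟨by omega, by omega⟩, by omega, by omega⟩
  · rintro ⟨⟨⟨p, q⟩, r, s⟩, hx⟩
    rw [Function.mem_support] at hx
    have hox : Odd (p + q + r + s) := by by_contra h0; exact hx (by simp [jS, h0])
    obtain ⟨a, ha⟩ := hox
    obtain ⟨k2, hk2⟩ : ∃ k, p + q - r - s = 2 * k + 1 := ⟨(p + q - r - s - 1) / 2, by omega⟩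
    obtain ⟨k3, hk3⟩ : ∃ k, p - q + r - s = 2 * k + 1 := ⟨(p - q + r - s - 1) / 2, by omega⟩
    obtain ⟨k4, hk4⟩ : ∃ k, -p + q + r - s = 2 * k + 1 := ⟨(-p + q + r - s - 1) / 2, by omega⟩
    have hT : jT2 ((p, q), (r, s)) = ((a, k2), (k3, k4)) := by
      simp only [jT2, Prod.mk.injEq]
      refine ⟨⟨by omega, by omega⟩, by omega, by omega⟩
    dsimp only
    rw [hT]
    have he : Odd (jS ((a, k2), (k3, k4))) := by
      simp only [jS]; exact ⟨(p + q + r - s - 3) / 2, by omega⟩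
    have ho : Odd (jS ((p, q), (r, s))) := by simp only [jS]; exact ⟨a, ha⟩
    rw [if_pos he, if_pos ho, one_mul, one_mul]
    exact exp_eq_2 τ ha hk2 hk3 hk4

/-! ### Main theorem -/

theorem jacobi_identity (τ : ℂ) (hτ : 0 < τ.im) :
    theta2 τ ^ 4 + theta4 τ ^ 4 = theta3 τ ^ 4 := by
  have hF2 := summable_norm_jF2 hτ
  have hF3 := summable_norm_jF3 hτ
  have hF4 := summable_norm_jF4 hτ
  have h2 : theta2 τ ^ 4 = ∑' v, jG (jF2 τ) v := tsum_pow_four hF2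
  have h3 : theta3 τ ^ 4 = ∑' v, jG (jF3 τ) v := tsum_pow_four hF3
  have h4 : theta4 τ ^ 4 = ∑' v, jG (jF4 τ) v := tsum_pow_four hF4
  have sG3 : Summable (jG (jF3 τ)) := (summable_norm_jG hF3).of_norm
  have sG4 : Summable (jG (jF4 τ)) := (summable_norm_jG hF4).of_norm
  have bound : ∀ (P : (ℤ × ℤ) × (ℤ × ℤ) → Prop) [DecidablePred P] (F : ℤ → ℂ)
      (v : (ℤ × ℤ) × (ℤ × ℤ)),
      ‖(if P v then (1:ℂ) else 0) * jG F v‖ ≤ ‖jG F v‖ := by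
    intro P _ F v
    by_cases h : P v <;> simp [h]
  have scG3 : Summable (fun v => (if Odd (jS v) then (1:ℂ) else 0) * jG (jF3 τ) v) :=
    Summable.of_norm_bounded (summable_norm_jG hF3) (bound _ _)
  have sdG2 : Summable (fun v => (if Even (jS v) then (1:ℂ) else 0) * jG (jF2 τ) v) :=
    Summable.of_norm_bounded (summable_norm_jG hF2) (bound _ _)
  have scG2 : Summable (fun v => (if Odd (jS v) then (1:ℂ) else 0) * jG (jF2 τ) v) :=
    Summable.of_norm_bounded (summable_norm_jG hF2) (bound _ _)
  have key34 : theta3 τ ^ 4 - theta4 τ ^ 4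
      = 2 * ∑' v, (if Odd (jS v) then (1:ℂ) else 0) * jG (jF3 τ) v := by
    rw [h3, h4, ← Summable.tsum_sub sG3 sG4, ← tsum_mul_left]
    exact tsum_congr (sub_eq_two_mul τ)
  have key2 : theta2 τ ^ 4
      = 2 * ∑' v, (if Odd (jS v) then (1:ℂ) else 0) * jG (jF3 τ) v := by
    have split : ∀ v, jG (jF2 τ) v
        = (if Even (jS v) then (1:ℂ) else 0) * jG (jF2 τ) v
          + (if Odd (jS v) then (1:ℂ) else 0) * jG (jF2 τ) v := by
      intro v
      rcases Int.even_or_odd (jS v) with he | ho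
      · rw [if_pos he, if_neg (by simpa using he)]; ring
      · rw [if_neg (by simpa using ho), if_pos ho]; ring
    rw [h2, tsum_congr split, Summable.tsum_add sdG2 scG2, bij1, bij2]
    ring
  linear_combination key2 - key34
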